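/- Let A be a discrete valuation ring with maximal ideal 𝔪 and let S be a finite subset of A. Then S is n-universal if and only if S contains a subset with n+1 elements which is almost uniformly distributed modulo 𝔪^k for every positive integer k. -/

import Mathlib

open scoped Classical

/-- A finite subset `S` of an integral domain `A` with field of fractions `K` is
`n`-universal if for every polynomial `P ∈ K[X]` of degree at most `n`, `P` maps `A`
into `A` if and only if `P` maps `S` into `A`. -/
def IsNUniversal (A K : Type*) [CommRing A] [IsDomain A] [Field K] [Algebra A K]
    [IsFractionRing A K] (n : ℕ) (S : Finset A) : Prop :=
  ∀ P : Polynomial K, P.natDegree ≤ n →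
    ((∀ a : A, ∃ b : A, Polynomial.eval (algebraMap A K a) P = algebraMap A K b) ↔
      ∀ s ∈ S, ∃ b : A, Polynomial.eval (algebraMap A K s) P = algebraMap A K b)

/-- A finite subset `S` of a commutative ring `A` is almost uniformly distributed
modulo an ideal `I` if for all `a, b ∈ A` the difference of the numbers of elements
of `S` congruent to `a` resp. `b` modulo `I` lies in `{-1, 0, 1}`. -/
def IsAUD {A : Type*} [CommRing A] (I : Ideal A) (S : Finset A) : Prop :=
  ∀ a b : A,
    ((S.filter fun s => s - a ∈ I).card : ℤ) - ((S.filter fun s => s - b ∈ I).card : ℤ) ∈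
      ({-1, 0, 1} : Set ℤ)

namespace NUniv

variable {A : Type*} [CommRing A] [IsDomain A] [IsDiscreteValuationRing A]

/-- the number of elements of `T` congruent to `a` mod `π ^ k` -/
noncomputable def cnt (π : A) (T : Finset A) (k : ℕ) (a : A) : ℕ :=
  (T.filter fun t => π ^ k ∣ t - a).card

section basic

variable {π : A} (hπ : Irreducible π)

lemma vfin (hπ : Irreducible π) {x : A} (hx : x ≠ 0) : FiniteMultiplicity π x :=
  FiniteMultiplicity.of_prime_left (UniqueFactorizationMonoid.irreducible_iff_prime.1 hπ) hx

lemma pow_dvd_iff (hπ : Irreducible π) {x : A} (hx : x ≠ 0) (k : ℕ) :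
    π ^ k ∣ x ↔ k ≤ multiplicity π x :=
  (vfin hπ hx).pow_dvd_iff_le_multiplicity

lemma vv_neg (x : A) : multiplicity π (-x) = multiplicity π x :=
  multiplicity_neg π x

lemma vv_prod (hπ : Irreducible π) {ι : Type*} (s : Finset ι) (f : ι → A)
    (hf : ∀ i ∈ s, f i ≠ 0) :
    multiplicity π (∏ i ∈ s, f i) = ∑ i ∈ s, multiplicity π (f i) := by
  classical
  induction s using Finset.cons_induction with
  | empty =>
    simp only [Finset.prod_empty, Finset.sum_empty]
    exact multiplicity_eq_zero.2 (fun h => hπ.not_isUnit (isUnit_of_dvd_one h))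
  | cons a s ha ih =>
    rw [Finset.prod_cons, Finset.sum_cons, ← ih (fun i hi => hf i (Finset.mem_cons_of_mem hi))]
    have h1 : f a ≠ 0 := hf a (Finset.mem_cons_self a s)
    have h2 : (∏ i ∈ s, f i) ≠ 0 :=
      Finset.prod_ne_zero_iff.2 (fun i hi => hf i (Finset.mem_cons_of_mem hi))
    exact multiplicity_mul (UniqueFactorizationMonoid.irreducible_iff_prime.1 hπ)
      (vfin hπ (mul_ne_zero h1 h2))

lemma vv_eq_card (hπ : Irreducible π) {x : A} (hx : x ≠ 0) {M : ℕ}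
    (hM : multiplicity π x ≤ M) :
    multiplicity π x = ((Finset.Icc 1 M).filter fun k => π ^ k ∣ x).card := by
  have heq : ((Finset.Icc 1 M).filter fun k => π ^ k ∣ x)
      = Finset.Icc 1 (multiplicity π x) := by
    ext k
    simp only [Finset.mem_filter, Finset.mem_Icc, pow_dvd_iff hπ hx]
    omega
  rw [heq, Nat.card_Icc]
  omega

/-- sum of valuations as a double count -/
lemma sum_vv_eq (hπ : Irreducible π) (W : Finset A) (a : A) (h : ∀ t ∈ W, t ≠ a) {M : ℕ}
    (hM : ∀ t ∈ W, multiplicity π (t - a) ≤ M) :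
    ∑ t ∈ W, multiplicity π (t - a)
      = ∑ k ∈ Finset.Icc 1 M, (W.filter fun t => π ^ k ∣ t - a).card := by
  classical
  have h1 : ∀ t ∈ W, multiplicity π (t - a)
      = ∑ k ∈ Finset.Icc 1 M, if π ^ k ∣ t - a then 1 else 0 := by
    intro t ht
    rw [← Finset.card_filter]
    exact vv_eq_card hπ (sub_ne_zero.2 (h t ht)) (hM t ht)
  rw [Finset.sum_congr rfl h1, Finset.sum_comm]
  exact Finset.sum_congr rfl fun k _ => (Finset.card_filter _ _).symm

lemma mem_pow_maximalIdeal_iff (hπ : Irreducible π) (k : ℕ) (y : A) :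
    y ∈ (IsLocalRing.maximalIdeal A) ^ k ↔ π ^ k ∣ y := by
  rw [hπ.maximalIdeal_eq, Ideal.span_singleton_pow, Ideal.mem_span_singleton]

end basic

section cntfacts

variable (π : A) (T : Finset A)

lemma cnt_congr {k : ℕ} {a b : A} (h : π ^ k ∣ a - b) : cnt π T k a = cnt π T k b := by
  unfold cnt
  congr 1
  apply Finset.filter_congr
  intro t _
  constructor
  · intro h2
    have he : t - b = (t - a) + (a - b) := by ring
    rw [he]; exact dvd_add h2 h
  · intro h2
    have he : t - a = (t - b) - (a - b) := by ring
    rw [he]; exact dvd_sub h2 h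

lemma cnt_anti {k l : ℕ} (hkl : k ≤ l) (a : A) : cnt π T l a ≤ cnt π T k a := by
  apply Finset.card_le_card
  apply Finset.monotone_filter_right
  intro t _ ht
  exact dvd_trans (pow_dvd_pow π hkl) ht

lemma cnt_one_le {k : ℕ} {a t : A} (ht : t ∈ T) (h : π ^ k ∣ t - a) : 1 ≤ cnt π T k a :=
  Finset.card_pos.2 ⟨t, Finset.mem_filter.2 ⟨ht, h⟩⟩

lemma cnt_le_card (k : ℕ) (a : A) : cnt π T k a ≤ T.card := Finset.card_filter_le _ _

lemma cnt_zero (a : A) : cnt π T 0 a = T.card := by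
  unfold cnt
  rw [Finset.filter_true_of_mem]
  intro t _
  simpa using one_dvd (t - a)

lemma erase_cnt_self {t : A} (ht : t ∈ T) (l : ℕ) :
    cnt π (T.erase t) l t = cnt π T l t - 1 := by
  unfold cnt
  rw [Finset.filter_erase, Finset.card_erase_of_mem]
  exact Finset.mem_filter.2 ⟨ht, by simp⟩

lemma erase_cnt_other (t : A) {a : A} {l : ℕ} (h : ¬ π ^ l ∣ t - a) :
    cnt π (T.erase t) l a = cnt π T l a := by
  unfold cnt
  rw [Finset.filter_erase, Finset.erase_eq_of_notMem]
  intro hmem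
  exact h (Finset.mem_filter.1 hmem).2

/-- there is a child class of `x + 𝔪^l` (at level `l+1`) of maximal count -/
lemma exists_max_child (l : ℕ) (x : A) :
    ∃ y : A, π ^ l ∣ y - x ∧
      ∀ y' : A, π ^ l ∣ y' - x → cnt π T (l + 1) y' ≤ cnt π T (l + 1) y := by
  have hne : ((fun y => cnt π T (l + 1) y) '' {y : A | π ^ l ∣ y - x}).Nonempty :=
    ⟨cnt π T (l + 1) x, ⟨x, by simp, rfl⟩⟩
  have hbdd : BddAbove ((fun y => cnt π T (l + 1) y) '' {y : A | π ^ l ∣ y - x}) := by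
    refine ⟨T.card, ?_⟩
    rintro m ⟨y, _, rfl⟩
    exact cnt_le_card π T _ y
  obtain ⟨y, hy, hval⟩ := Nat.sSup_mem hne hbdd
  refine ⟨y, hy, fun y' hy' => ?_⟩
  exact le_trans (le_csSup hbdd ⟨y', hy', rfl⟩) (le_of_eq hval.symm)

lemma exists_min_child (l : ℕ) (x : A) :
    ∃ y : A, π ^ l ∣ y - x ∧
      ∀ y' : A, π ^ l ∣ y' - x → cnt π T (l + 1) y ≤ cnt π T (l + 1) y' := by
  have hne : ((fun y => cnt π T (l + 1) y) '' {y : A | π ^ l ∣ y - x}).Nonempty :=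
    ⟨cnt π T (l + 1) x, ⟨x, by simp, rfl⟩⟩
  obtain ⟨y, hy, hval⟩ := Nat.sInf_mem hne
  refine ⟨y, hy, fun y' hy' => ?_⟩
  exact le_trans (le_of_eq hval) (Nat.sInf_le ⟨y', hy', rfl⟩)

end cntfacts

section fiber

variable {π : A} (hπ : Irreducible π) (T : Finset A)

/-- a chosen representative of each residue class mod `π` -/
noncomputable def secq (π : A) : (A ⧸ Ideal.span {π}) → A :=
  Function.surjInv Ideal.Quotient.mk_surjective

lemma secq_spec (π : A) (r : A ⧸ Ideal.span {π}) :
    Ideal.Quotient.mk (Ideal.span {π}) (secq π r) = r :=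
  Function.surjInv_eq _ r

/-- a chosen quotient by `π ^ l` -/
noncomputable def wdiv (π : A) (l : ℕ) (z : A) : A :=
  if h : π ^ l ∣ z then h.choose else 0

lemma wdiv_spec {π : A} {l : ℕ} {z : A} (h : π ^ l ∣ z) : z = π ^ l * wdiv π l z := by
  unfold wdiv
  rw [dif_pos h]
  exact h.choose_spec

lemma child_iff {π : A} (hπ : Irreducible π) (l : ℕ) (x t : A) (r : A ⧸ Ideal.span {π})
    (ht : π ^ l ∣ t - x) :
    Ideal.Quotient.mk (Ideal.span {π}) (wdiv π l (t - x)) = r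
      ↔ π ^ (l + 1) ∣ t - (x + π ^ l * secq π r) := by
  have hx0 : π ^ l ≠ 0 := pow_ne_zero _ hπ.ne_zero
  have heq : t - (x + π ^ l * secq π r) = π ^ l * (wdiv π l (t - x) - secq π r) := by
    have h1 := wdiv_spec ht
    rw [mul_sub, ← h1]
    ring
  rw [heq, pow_succ, mul_dvd_mul_iff_left hx0]
  rw [← secq_spec π r, Ideal.Quotient.mk_eq_mk_iff_sub_mem, Ideal.mem_span_singleton,
    secq_spec π r]

lemma child_of {π : A} (hπ : Irreducible π) (l : ℕ) (x y : A) (hy : π ^ l ∣ y - x) :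
    ∃ r : A ⧸ Ideal.span {π}, π ^ (l + 1) ∣ y - (x + π ^ l * secq π r) :=
  ⟨Ideal.Quotient.mk (Ideal.span {π}) (wdiv π l (y - x)), (child_iff hπ l x y _ hy).1 rfl⟩

/-- In the finite-residue-field case: the count at level `l` is the sum, over residues `r`,
of the counts of the child classes at level `l+1`, and all children are siblings. -/
lemma cnt_fiber (hπ : Irreducible π) (T : Finset A)
    [Fintype (A ⧸ Ideal.span {π})] (l : ℕ) (x : A) :
    ∃ ch : (A ⧸ Ideal.span {π}) → A,
      (∀ r, π ^ l ∣ ch r - x) ∧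
      (cnt π T l x = ∑ r : A ⧸ Ideal.span {π}, cnt π T (l + 1) (ch r)) ∧
      (∀ y : A, π ^ l ∣ y - x → ∃ r, π ^ (l + 1) ∣ y - ch r) := by
  classical
  refine ⟨fun r => x + π ^ l * secq π r, fun r => ⟨secq π r, by ring⟩, ?_, ?_⟩
  · have hsum := Finset.card_eq_sum_card_fiberwise
      (s := T.filter fun t => π ^ l ∣ t - x) (t := Finset.univ)
      (f := fun t => Ideal.Quotient.mk (Ideal.span {π}) (wdiv π l (t - x)))
      (fun t _ => Finset.mem_univ _)
    rw [cnt, hsum]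
    refine Finset.sum_congr rfl fun r _ => ?_
    rw [Finset.filter_filter]
    unfold cnt
    congr 1
    apply Finset.filter_congr
    intro t _
    constructor
    · rintro ⟨h1, h2⟩
      exact (child_iff hπ l x t r h1).1 h2
    · intro h
      have h1 : π ^ l ∣ t - x := by
        have he : t - x = (t - (x + π ^ l * secq π r)) + π ^ l * secq π r := by ring
        rw [he]
        exact dvd_add (dvd_trans (pow_dvd_pow π (Nat.le_succ l)) h) ⟨secq π r, rfl⟩
      exact ⟨h1, (child_iff hπ l x t r h1).2 h⟩
  · intro y hy
    exact child_of hπ l x y hy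

lemma residue_two_le (hπ : Irreducible π) [Fintype (A ⧸ Ideal.span {π})] :
    2 ≤ Fintype.card (A ⧸ Ideal.span {π}) := by
  have hne : Ideal.span {π} ≠ (⊤ : Ideal A) := by
    simpa [Ideal.span_singleton_eq_top] using hπ.not_isUnit
  have : Nontrivial (A ⧸ Ideal.span {π}) := Ideal.Quotient.nontrivial_iff.mpr hne
  exact Fintype.one_lt_card

/-- In the infinite-residue-field case there is an empty child class. -/
lemma exists_empty_child (hπ : Irreducible π) (T : Finset A)
    [Infinite (A ⧸ Ideal.span {π})] (l : ℕ) (x : A) :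
    ∃ y : A, π ^ l ∣ y - x ∧ cnt π T (l + 1) y = 0 := by
  classical
  obtain ⟨r, hr⟩ := Infinite.exists_notMem_finset
    ((T.filter fun t => π ^ l ∣ t - x).image
      fun t => Ideal.Quotient.mk (Ideal.span {π}) (wdiv π l (t - x)))
  refine ⟨x + π ^ l * secq π r, ⟨secq π r, by ring⟩, ?_⟩
  rw [cnt, Finset.card_eq_zero]
  rw [Finset.eq_empty_iff_forall_notMem]
  intro t ht
  rw [Finset.mem_filter] at ht
  obtain ⟨htT, htd⟩ := ht
  have h1 : π ^ l ∣ t - x := by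
    have he : t - x = (t - (x + π ^ l * secq π r)) + π ^ l * secq π r := by ring
    rw [he]
    exact dvd_add (dvd_trans (pow_dvd_pow π (Nat.le_succ l)) htd) ⟨secq π r, rfl⟩
  exact hr (Finset.mem_image.2 ⟨t, Finset.mem_filter.2 ⟨htT, h1⟩,
    (child_iff hπ l x t r h1).2 htd⟩)

end fiber

section combinatorial

variable {π : A} (T : Finset A)

/-- Balance at a level -/
def Bal (π : A) (T : Finset A) (k : ℕ) : Prop := ∀ a b : A, cnt π T k a ≤ cnt π T k b + 1

lemma sibling_gap (hπ : Irreducible π) (T : Finset A) {k : ℕ} (hk : 1 ≤ k)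
    (hbal : Bal π T (k - 1)) {a b : A} (hgap : cnt π T k b + 2 ≤ cnt π T k a) :
    ∃ α β : A, π ^ (k - 1) ∣ α - β ∧ cnt π T k β + 2 ≤ cnt π T k α := by
  by_contra hcon
  push_neg at hcon
  have hsb : ∀ α β : A, π ^ (k - 1) ∣ α - β → cnt π T k α ≤ cnt π T k β + 1 := by
    intro α β h
    have := hcon α β h
    omega
  obtain ⟨l, rfl⟩ : ∃ l, k = l + 1 := ⟨k - 1, by omega⟩
  simp only [Nat.add_sub_cancel] at hbal hsb
  obtain ⟨ya, hya, hya_min⟩ := exists_min_child π T l a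
  obtain ⟨yb, hyb, hyb_min⟩ := exists_min_child π T l b
  set ma := cnt π T (l + 1) ya with hma
  set mb := cnt π T (l + 1) yb with hmb
  have ha1 : cnt π T (l + 1) a ≤ ma + 1 := hsb a ya (dvd_sub_comm.1 hya)
  have hb1 : mb ≤ cnt π T (l + 1) b := hyb_min b (by simp)
  have hmamb : mb + 1 ≤ ma := by omega
  rcases finite_or_infinite (A ⧸ Ideal.span {π}) with hfin | hinf
  · have : Fintype (A ⧸ Ideal.span {π}) := Fintype.ofFinite _
    obtain ⟨q, hqcard⟩ : ∃ q, Fintype.card (A ⧸ Ideal.span {π}) = q := ⟨_, rfl⟩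
    have hq2 : 2 ≤ q := hqcard ▸ residue_two_le hπ
    obtain ⟨cha, hcha_dvd, hcha_sum, hcha_of⟩ := cnt_fiber hπ T l a
    obtain ⟨chb, hchb_dvd, hchb_sum, hchb_of⟩ := cnt_fiber hπ T l b
    have hfa_lo : ∀ r, ma ≤ cnt π T (l + 1) (cha r) := fun r => hya_min _ (hcha_dvd r)
    have hfb_lo : ∀ r, mb ≤ cnt π T (l + 1) (chb r) := fun r => hyb_min _ (hchb_dvd r)
    have hfb_hi : ∀ r, cnt π T (l + 1) (chb r) ≤ mb + 1 := by
      intro r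
      refine hsb _ yb ?_
      have he : chb r - yb = (chb r - b) - (yb - b) := by ring
      rw [he]
      exact dvd_sub (hchb_dvd r) hyb
    -- lower bound for cnt l a
    have h1 : q * ma ≤ cnt π T l a := by
      have h1a : Finset.univ.card • ma ≤ ∑ r : A ⧸ Ideal.span {π}, cnt π T (l + 1) (cha r) :=
        Finset.card_nsmul_le_sum _ _ _ (fun r _ => hfa_lo r)
      rw [Finset.card_univ, hqcard, smul_eq_mul] at h1a
      rw [hcha_sum]
      exact h1a
    -- upper bound for cnt l b
    obtain ⟨rb, hrb⟩ := hchb_of yb hyb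
    have hfb_rb : cnt π T (l + 1) (chb rb) = mb := by
      rw [hmb]
      exact cnt_congr π T (dvd_sub_comm.1 hrb)
    have h3 : cnt π T l b ≤ mb + (q - 1) * (mb + 1) := by
      have h3a : ∑ r ∈ Finset.univ.erase rb, cnt π T (l + 1) (chb r)
          ≤ (Finset.univ.erase rb).card • (mb + 1) :=
        Finset.sum_le_card_nsmul _ _ _ (fun r _ => hfb_hi r)
      rw [Finset.card_erase_of_mem (Finset.mem_univ rb), Finset.card_univ, hqcard,
        smul_eq_mul] at h3a
      rw [hchb_sum, ← Finset.add_sum_erase _ _ (Finset.mem_univ rb), hfb_rb]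
      omega
    have hbalab : cnt π T l a ≤ cnt π T l b + 1 := hbal a b
    have e1 : mb + (q - 1) * (mb + 1) + 1 = q * (mb + 1) := by
      have h : q - 1 + 1 = q := by omega
      calc mb + (q - 1) * (mb + 1) + 1 = (q - 1 + 1) * (mb + 1) := by ring
      _ = q * (mb + 1) := by rw [h]
    have h4 : q * ma ≤ q * (mb + 1) := by omega
    have h5 : ma ≤ mb + 1 := Nat.le_of_mul_le_mul_left h4 (by omega)
    have h6 : ma = mb + 1 := by omega
    -- a's own fiber
    obtain ⟨ra, hra⟩ := hcha_of a (by simp)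
    have hfa_ra : cnt π T (l + 1) (cha ra) = cnt π T (l + 1) a :=
      cnt_congr π T (dvd_sub_comm.1 hra)
    have h7 : cnt π T (l + 1) a + (q - 1) * ma ≤ cnt π T l a := by
      have h7a : (Finset.univ.erase ra).card • ma
          ≤ ∑ r ∈ Finset.univ.erase ra, cnt π T (l + 1) (cha r) :=
        Finset.card_nsmul_le_sum _ _ _ (fun r _ => hfa_lo r)
      rw [Finset.card_erase_of_mem (Finset.mem_univ ra), Finset.card_univ, hqcard,
        smul_eq_mul] at h7a
      have h7b : cnt π T l a = cnt π T (l + 1) (cha ra)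
          + ∑ r ∈ Finset.univ.erase ra, cnt π T (l + 1) (cha r) := by
        rw [hcha_sum, ← Finset.add_sum_erase _ _ (Finset.mem_univ ra)]
      rw [hfa_ra] at h7b
      omega
    have e2 : (q - 1) * ma + ma = q * ma := by
      have h : q - 1 + 1 = q := by omega
      calc (q - 1) * ma + ma = (q - 1 + 1) * ma := by ring
      _ = q * ma := by rw [h]
    -- conclude
    have h8 : cnt π T l a ≤ q * ma := by
      rw [h6]
      omega
    have h9 : cnt π T (l + 1) a ≤ ma := by omega
    omega
  · obtain ⟨y0, hy0, hy0z⟩ := exists_empty_child hπ T l a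
    have := hsb a y0 (dvd_sub_comm.1 hy0)
    omega

/-- greedy chains -/
noncomputable def stepMax (π : A) (T : Finset A) (l : ℕ) (x : A) : A :=
  (exists_max_child π T l x).choose

noncomputable def stepMin (π : A) (T : Finset A) (l : ℕ) (x : A) : A :=
  (exists_min_child π T l x).choose

noncomputable def chMax (π : A) (T : Finset A) (k : ℕ) (x0 : A) : ℕ → A
  | 0 => x0
  | j + 1 => stepMax π T (k + j) (chMax π T k x0 j)

noncomputable def chMin (π : A) (T : Finset A) (k : ℕ) (x0 : A) : ℕ → A
  | 0 => x0
  | j + 1 => stepMin π T (k + j) (chMin π T k x0 j)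

lemma stepMax_dvd (π : A) (T : Finset A) (l : ℕ) (x : A) :
    π ^ l ∣ stepMax π T l x - x :=
  (exists_max_child π T l x).choose_spec.1

lemma stepMax_max (π : A) (T : Finset A) (l : ℕ) (x : A) (y : A) (hy : π ^ l ∣ y - x) :
    cnt π T (l + 1) y ≤ cnt π T (l + 1) (stepMax π T l x) :=
  (exists_max_child π T l x).choose_spec.2 y hy

lemma stepMin_dvd (π : A) (T : Finset A) (l : ℕ) (x : A) :
    π ^ l ∣ stepMin π T l x - x :=
  (exists_min_child π T l x).choose_spec.1

lemma stepMin_min (π : A) (T : Finset A) (l : ℕ) (x : A) (y : A) (hy : π ^ l ∣ y - x) :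
    cnt π T (l + 1) (stepMin π T l x) ≤ cnt π T (l + 1) y :=
  (exists_min_child π T l x).choose_spec.2 y hy

lemma step_max_bound_fin (hπ : Irreducible π) (T : Finset A) [Fintype (A ⧸ Ideal.span {π})]
    (l : ℕ) (x : A) :
    cnt π T l x ≤ Fintype.card (A ⧸ Ideal.span {π}) * cnt π T (l + 1) (stepMax π T l x) := by
  obtain ⟨ch, hdvd, hsum, _⟩ := cnt_fiber hπ T l x
  rw [hsum]
  calc ∑ r : A ⧸ Ideal.span {π}, cnt π T (l + 1) (ch r)
      ≤ Finset.univ.card • cnt π T (l + 1) (stepMax π T l x) :=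
        Finset.sum_le_card_nsmul _ _ _ (fun r _ => stepMax_max π T l x _ (hdvd r))
  _ = _ := by rw [Finset.card_univ, smul_eq_mul]

lemma step_min_bound_fin (hπ : Irreducible π) (T : Finset A) [Fintype (A ⧸ Ideal.span {π})]
    (l : ℕ) (x : A) :
    Fintype.card (A ⧸ Ideal.span {π}) * cnt π T (l + 1) (stepMin π T l x) ≤ cnt π T l x := by
  obtain ⟨ch, hdvd, hsum, _⟩ := cnt_fiber hπ T l x
  rw [hsum]
  have this : Finset.univ.card • cnt π T (l + 1) (stepMin π T l x)
      ≤ ∑ r : A ⧸ Ideal.span {π}, cnt π T (l + 1) (ch r) :=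
        Finset.card_nsmul_le_sum _ _ _ (fun r _ => stepMin_min π T l x _ (hdvd r))
  exact le_trans (le_of_eq (by rw [Finset.card_univ, smul_eq_mul])) this

lemma step_min_zero_inf (hπ : Irreducible π) (T : Finset A) [Infinite (A ⧸ Ideal.span {π})]
    (l : ℕ) (x : A) :
    cnt π T (l + 1) (stepMin π T l x) = 0 := by
  obtain ⟨y, hy, hyz⟩ := exists_empty_child hπ T l x
  have := stepMin_min π T l x y hy
  omega

lemma step_max_pos (π : A) (T : Finset A) (l : ℕ) (x : A) (h : 1 ≤ cnt π T l x) :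
    1 ≤ cnt π T (l + 1) (stepMax π T l x) := by
  obtain ⟨t, ht⟩ := Finset.card_pos.1 h
  rw [Finset.mem_filter] at ht
  calc 1 ≤ cnt π T (l + 1) t := cnt_one_le π T ht.1 (by simp)
  _ ≤ _ := stepMax_max π T l x t ht.2

lemma step_min_le (π : A) (T : Finset A) (l : ℕ) (x : A) :
    cnt π T (l + 1) (stepMin π T l x) ≤ cnt π T l x :=
  le_trans (stepMin_min π T l x x (by simp)) (cnt_anti π T (Nat.le_succ l) x)

lemma step_gap (hπ : Irreducible π) (T : Finset A) (l : ℕ) (x y : A)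
    (h : cnt π T l y + 1 ≤ cnt π T l x) :
    cnt π T (l + 1) (stepMin π T l y) + 1 ≤ cnt π T (l + 1) (stepMax π T l x) := by
  rcases finite_or_infinite (A ⧸ Ideal.span {π}) with hfin | hinf
  · have : Fintype (A ⧸ Ideal.span {π}) := Fintype.ofFinite _
    set q := Fintype.card (A ⧸ Ideal.span {π}) with hq
    have hq2 : 2 ≤ q := residue_two_le hπ
    have h1 := step_max_bound_fin hπ T l x
    have h2 := step_min_bound_fin hπ T l y
    rw [← hq] at h1 h2
    have h3 : q * cnt π T (l + 1) (stepMin π T l y) < q * cnt π T (l + 1) (stepMax π T l x) := by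
      omega
    have := Nat.lt_of_mul_lt_mul_left h3
    omega
  · have h1 : cnt π T (l + 1) (stepMin π T l y) = 0 := step_min_zero_inf hπ T l y
    have h2 : 1 ≤ cnt π T (l + 1) (stepMax π T l x) := step_max_pos π T l x (by omega)
    omega

lemma step_min_half (hπ : Irreducible π) (T : Finset A) (l : ℕ) (x : A) :
    2 * cnt π T (l + 1) (stepMin π T l x) ≤ cnt π T l x := by
  rcases finite_or_infinite (A ⧸ Ideal.span {π}) with hfin | hinf
  · have : Fintype (A ⧸ Ideal.span {π}) := Fintype.ofFinite _
    have hq2 : 2 ≤ Fintype.card (A ⧸ Ideal.span {π}) := residue_two_le hπ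
    have h2 := step_min_bound_fin hπ T l x
    nlinarith [Nat.zero_le (cnt π T (l + 1) (stepMin π T l x))]
  · rw [step_min_zero_inf hπ T l x]
    omega

lemma chMax_succ (π : A) (T : Finset A) (k : ℕ) (x0 : A) (j : ℕ) :
    chMax π T k x0 (j + 1) = stepMax π T (k + j) (chMax π T k x0 j) := rfl

lemma chMin_succ (π : A) (T : Finset A) (k : ℕ) (x0 : A) (j : ℕ) :
    chMin π T k x0 (j + 1) = stepMin π T (k + j) (chMin π T k x0 j) := rfl

lemma chMax_nested (π : A) (T : Finset A) (k : ℕ) (x0 : A) {i j : ℕ} (hij : i ≤ j) :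
    π ^ (k + i) ∣ chMax π T k x0 j - chMax π T k x0 i := by
  induction j with
  | zero =>
    obtain rfl : i = 0 := by omega
    simp
  | succ j ih =>
    rcases Nat.eq_or_lt_of_le hij with rfl | hij'
    · simp
    · have hij2 : i ≤ j := by omega
      have he : chMax π T k x0 (j + 1) - chMax π T k x0 i
          = (chMax π T k x0 (j + 1) - chMax π T k x0 j)
            + (chMax π T k x0 j - chMax π T k x0 i) := by ring
      rw [he]
      refine dvd_add (dvd_trans (pow_dvd_pow π (Nat.add_le_add_left hij2 k)) ?_) (ih hij2)
      rw [chMax_succ]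
      exact stepMax_dvd π T (k + j) _

lemma chMin_nested (π : A) (T : Finset A) (k : ℕ) (x0 : A) {i j : ℕ} (hij : i ≤ j) :
    π ^ (k + i) ∣ chMin π T k x0 j - chMin π T k x0 i := by
  induction j with
  | zero =>
    obtain rfl : i = 0 := by omega
    simp
  | succ j ih =>
    rcases Nat.eq_or_lt_of_le hij with rfl | hij'
    · simp
    · have hij2 : i ≤ j := by omega
      have he : chMin π T k x0 (j + 1) - chMin π T k x0 i
          = (chMin π T k x0 (j + 1) - chMin π T k x0 j)
            + (chMin π T k x0 j - chMin π T k x0 i) := by ring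
      rw [he]
      refine dvd_add (dvd_trans (pow_dvd_pow π (Nat.add_le_add_left hij2 k)) ?_) (ih hij2)
      rw [chMin_succ]
      exact stepMin_dvd π T (k + j) _

lemma chain_u_pos (hπ : Irreducible π) (T : Finset A) (k : ℕ) (x0 : A)
    (h0 : 1 ≤ cnt π T k x0) (j : ℕ) :
    1 ≤ cnt π T (k + j) (chMax π T k x0 j) := by
  induction j with
  | zero => exact h0
  | succ j ih =>
    rw [chMax_succ]
    exact step_max_pos π T (k + j) _ ih

lemma chain_gap (hπ : Irreducible π) (T : Finset A) (k : ℕ) (x0 y0 : A)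
    (h0 : cnt π T k y0 + 2 ≤ cnt π T k x0) (j : ℕ) (hj : 1 ≤ j) :
    cnt π T (k + j) (chMin π T k y0 j) + 1 ≤ cnt π T (k + j) (chMax π T k x0 j) := by
  induction j with
  | zero => omega
  | succ j ih =>
    rcases Nat.eq_zero_or_pos j with rfl | hj1
    · rw [chMax_succ, chMin_succ]
      refine step_gap hπ T (k + 0) x0 y0 ?_
      have e0 : k + 0 = k := rfl
      rw [e0]
      omega
    · rw [chMax_succ, chMin_succ]
      exact step_gap hπ T (k + j) _ _ (ih hj1)

lemma chain_v_zero (hπ : Irreducible π) (T : Finset A) (k : ℕ) (y0 : A) (j : ℕ)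
    (hj : cnt π T k y0 ≤ j) :
    cnt π T (k + j) (chMin π T k y0 j) = 0 := by
  have key : ∀ i : ℕ, cnt π T (k + i) (chMin π T k y0 i) = 0
      ∨ cnt π T (k + i) (chMin π T k y0 i) + i ≤ cnt π T k y0 := by
    intro i
    induction i with
    | zero =>
      right
      have e0 : chMin π T k y0 0 = y0 := rfl
      rw [e0]
      simp
    | succ i ih =>
      have hhalf : 2 * cnt π T (k + (i + 1)) (chMin π T k y0 (i + 1))
          ≤ cnt π T (k + i) (chMin π T k y0 i) := by
        rw [chMin_succ]
        exact step_min_half hπ T (k + i) _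
      rcases ih with h | h
      · left; omega
      · rcases Nat.eq_zero_or_pos (cnt π T (k + (i + 1)) (chMin π T k y0 (i + 1))) with h0 | h0
        · left; exact h0
        · right; omega
  rcases key j with h | h
  · exact h
  · omega

/-- separation level: distinct elements of `T` differ before this level -/
lemma sep_level (hπ : Irreducible π) (T : Finset A) {t t' : A} (ht : t ∈ T) (ht' : t' ∈ T)
    (hne : t ≠ t') {N : ℕ} (hN : (∑ p ∈ T.offDiag, multiplicity π (p.1 - p.2)) < N) :
    ¬ π ^ N ∣ t - t' := by
  intro hdvd
  have hmem : (t, t') ∈ T.offDiag := Finset.mem_offDiag.2 ⟨ht, ht', hne⟩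
  have hle : multiplicity π (t - t') ≤ ∑ p ∈ T.offDiag, multiplicity π (p.1 - p.2) := by
    simpa using Finset.single_le_sum
      (f := fun p : A × A => multiplicity π (p.1 - p.2)) (fun p _ => Nat.zero_le _) hmem
  have := (pow_dvd_iff hπ (sub_ne_zero.2 hne) N).1 hdvd
  omega

/-- local optimality implies balance at every level -/
lemma bal_of_local_opt (hπ : Irreducible π) (T : Finset A)
    (hopt : ∀ t ∈ T, ∀ a : A,
      π ^ (∑ j ∈ T.erase t, multiplicity π (t - j)) ∣ ∏ j ∈ T.erase t, (a - j))
    (k : ℕ) : Bal π T k := by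
  induction k using Nat.strong_induction_on with
  | _ k ih =>
  rcases Nat.eq_zero_or_pos k with rfl | hk1
  · intro a b
    rw [cnt_zero, cnt_zero]
    omega
  intro a b
  by_contra hcon
  have hgap0 : cnt π T k b + 2 ≤ cnt π T k a := by omega
  have hbal' : Bal π T (k - 1) := ih (k - 1) (by omega)
  obtain ⟨α, β, hαβ, hgap⟩ := sibling_gap hπ T hk1 hbal' hgap0
  clear hcon hgap0 a b
  -- the chains
  set L := (∑ p ∈ T.offDiag, multiplicity π (p.1 - p.2)) + T.card + 1 with hL
  set X := chMax π T k α with hX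
  set Y := chMin π T k β with hY
  have hX0 : X 0 = α := rfl
  have hY0 : Y 0 = β := rfl
  -- the top class of the max chain contains exactly one element t*
  have huL1 : 1 ≤ cnt π T (k + L) (X L) := chain_u_pos hπ T k α (by omega) L
  have huL2 : cnt π T (k + L) (X L) ≤ 1 := by
    by_contra hc
    have hgt : 1 < cnt π T (k + L) (X L) := by omega
    unfold cnt at hgt
    obtain ⟨t, ht, t', ht', htt'⟩ := Finset.one_lt_card.1 hgt
    rw [Finset.mem_filter] at ht ht'
    refine sep_level hπ T ht.1 ht'.1 htt' (N := k + L) (by omega) ?_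
    have he : t - t' = (t - X L) - (t' - X L) := by ring
    rw [he]
    exact dvd_sub ht.2 ht'.2
  have huL : cnt π T (k + L) (X L) = 1 := le_antisymm huL2 huL1
  obtain ⟨t0, ht0⟩ := Finset.card_eq_one.1 huL
  have ht0mem : t0 ∈ T ∧ π ^ (k + L) ∣ t0 - X L := by
    have : t0 ∈ T.filter fun t => π ^ (k + L) ∣ t - X L := by
      rw [ht0]; exact Finset.mem_singleton_self t0
    exact Finset.mem_filter.1 this
  -- congruences of t0 along the max chain
  have ht0X : ∀ j, j ≤ L → π ^ (k + j) ∣ t0 - X j := by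
    intro j hj
    have he : t0 - X j = (t0 - X L) + (X L - X j) := by ring
    rw [he]
    exact dvd_add (dvd_trans (pow_dvd_pow π (by omega)) ht0mem.2) (chMax_nested π T k α hj)
  have hcntX : ∀ j, j ≤ L → cnt π T (k + j) t0 = cnt π T (k + j) (X j) := by
    intro j hj
    exact cnt_congr π T (ht0X j hj)
  -- the point a := Y L
  set a := Y L with ha
  have haY : ∀ j, j ≤ L → π ^ (k + j) ∣ a - Y j := fun j hj => chMin_nested π T k β hj
  have hcntY : ∀ j, j ≤ L → cnt π T (k + j) a = cnt π T (k + j) (Y j) := by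
    intro j hj
    exact cnt_congr π T (haY j hj)
  have hvL : cnt π T (k + L) a = 0 := by
    rw [hcntY L le_rfl]
    exact chain_v_zero hπ T k β L (by have := cnt_le_card π T k β; omega)
  have hanotT : ∀ t ∈ T, t ≠ a := by
    intro t ht hta
    have : 1 ≤ cnt π T (k + L) a := cnt_one_le π T ht (by rw [hta]; simp)
    omega
  -- t0 ≡ α, a ≡ β mod π^k ; so π^(k-1) ∣ t0 - a but not π^k
  have ht0α : π ^ k ∣ t0 - α := by
    have := ht0X 0 (by omega)
    rwa [hX0, Nat.add_zero] at this
  have haβ : π ^ k ∣ a - β := by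
    have := haY 0 (by omega)
    rwa [hY0, Nat.add_zero] at this
  have ht0a : π ^ (k - 1) ∣ t0 - a := by
    have he : t0 - a = (t0 - α) + (α - β) - (a - β) := by ring
    rw [he]
    exact dvd_sub (dvd_add (dvd_trans (pow_dvd_pow π (by omega)) ht0α) hαβ)
      (dvd_trans (pow_dvd_pow π (by omega)) haβ)
  have hnk : ¬ π ^ k ∣ t0 - a := by
    intro hdvd
    have hαβk : π ^ k ∣ α - β := by
      have he : α - β = (t0 - a) - (t0 - α) + (a - β) := by ring
      rw [he]
      exact dvd_add (dvd_sub hdvd ht0α) haβ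
    have := cnt_congr π T hαβk
    omega
  -- valuation comparison
  set W := T.erase t0 with hW
  set m := ∑ j ∈ W, multiplicity π (t0 - j) with hm
  have hQa : π ^ m ∣ ∏ j ∈ W, (a - j) := hopt t0 ht0mem.1 a
  have hWne : ∀ j ∈ W, a - j ≠ 0 := by
    intro j hj
    have := hanotT j (Finset.mem_of_mem_erase hj)
    intro h0
    exact this (by linear_combination -h0)
  have hQane : (∏ j ∈ W, (a - j)) ≠ 0 := Finset.prod_ne_zero_iff.2 hWne
  have hmle : m ≤ multiplicity π (∏ j ∈ W, (a - j)) :=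
    (pow_dvd_iff hπ hQane m).1 hQa
  have hva : multiplicity π (∏ j ∈ W, (a - j)) = ∑ j ∈ W, multiplicity π (a - j) :=
    vv_prod hπ W _ hWne
  -- flip orientations
  have hflipm : m = ∑ j ∈ W, multiplicity π (j - t0) := by
    refine Finset.sum_congr rfl fun j hj => ?_
    rw [← vv_neg (π := π) (j - t0), neg_sub]
  have hflipa : ∑ j ∈ W, multiplicity π (a - j) = ∑ j ∈ W, multiplicity π (j - a) := by
    refine Finset.sum_congr rfl fun j hj => ?_
    rw [← vv_neg (π := π) (j - a), neg_sub]
  set M := m + (∑ j ∈ W, multiplicity π (a - j)) + (k + L) + 1 with hM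
  have hsum_e : ∑ j ∈ W, multiplicity π (j - t0)
      = ∑ l ∈ Finset.Icc 1 M, cnt π W l t0 := by
    refine sum_vv_eq hπ W t0 (fun j hj => Finset.ne_of_mem_erase hj) fun j hj => ?_
    have h1 : multiplicity π (j - t0) ≤ m := by
      rw [hflipm]
      exact Finset.single_le_sum (f := fun j => multiplicity π (j - t0))
        (fun p _ => Nat.zero_le _) hj
    omega
  have hsum_f : ∑ j ∈ W, multiplicity π (j - a)
      = ∑ l ∈ Finset.Icc 1 M, cnt π W l a := by
    refine sum_vv_eq hπ W a (fun j hj => fun h => hWne j hj (by rw [h]; ring)) fun j hj => ?_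
    have h1 : multiplicity π (j - a) ≤ ∑ j ∈ W, multiplicity π (a - j) := by
      rw [hflipa]
      exact Finset.single_le_sum (f := fun j => multiplicity π (j - a))
        (fun p _ => Nat.zero_le _) hj
    omega
  -- termwise comparison
  have hterm : ∀ l ∈ Finset.Icc 1 M, cnt π W l a ≤ cnt π W l t0 := by
    intro l hl
    rw [Finset.mem_Icc] at hl
    rcases lt_or_ge l k with hlk | hlk
    · -- l ≤ k - 1 : the two counts agree
      have hdvd : π ^ l ∣ t0 - a := dvd_trans (pow_dvd_pow π (by omega)) ht0a
      exact le_of_eq (cnt_congr π W (dvd_sub_comm.1 hdvd))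
    · -- l ≥ k
      have hnd : ¬ π ^ l ∣ t0 - a := fun h => hnk (dvd_trans (pow_dvd_pow π hlk) h)
      rw [erase_cnt_other π T t0 hnd, erase_cnt_self π T ht0mem.1 l]
      rcases le_or_gt l (k + L) with hlL | hlL
      · obtain ⟨j, rfl⟩ : ∃ j, l = k + j := ⟨l - k, by omega⟩
        have hjL : j ≤ L := by omega
        rw [hcntX j hjL, hcntY j hjL]
        rcases Nat.eq_zero_or_pos j with rfl | hj1
        · rw [hX0, hY0]
          simp only [Nat.add_zero]
          omega
        · have hcg := chain_gap hπ T k α β (by omega) j hj1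
          rw [← hX, ← hY] at hcg
          omega
      · have h1 : cnt π T l a = 0 := by
          have := cnt_anti π T (le_of_lt hlL) a
          omega
        have h2 : 1 ≤ cnt π T l t0 := cnt_one_le π T ht0mem.1 (by simp)
        omega
  have hstrict : cnt π W k a < cnt π W k t0 := by
    have hnd : ¬ π ^ k ∣ t0 - a := hnk
    rw [erase_cnt_other π T t0 hnd, erase_cnt_self π T ht0mem.1 k]
    have h0 := hcntX 0 (by omega)
    have h1 := hcntY 0 (by omega)
    rw [hX0] at h0
    rw [hY0] at h1
    simp only [Nat.add_zero] at h0 h1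
    omega
  have hklt : k ∈ Finset.Icc 1 M := Finset.mem_Icc.2 ⟨hk1, by omega⟩
  have hlt : ∑ l ∈ Finset.Icc 1 M, cnt π W l a < ∑ l ∈ Finset.Icc 1 M, cnt π W l t0 :=
    Finset.sum_lt_sum hterm ⟨k, hklt, hstrict⟩
  rw [← hsum_e, ← hsum_f] at hlt
  omega

end combinatorial

section aud

variable {π : A}

/-- almost uniform distribution (in balance form) implies local optimality -/
lemma local_opt_of_bal (hπ : Irreducible π) (T : Finset A)
    (hbal : ∀ k, 1 ≤ k → Bal π T k) :
    ∀ t ∈ T, ∀ a : A,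
      π ^ (∑ j ∈ T.erase t, multiplicity π (t - j)) ∣ ∏ j ∈ T.erase t, (a - j) := by
  intro t0 ht0 a
  set W := T.erase t0 with hW
  set m := ∑ j ∈ W, multiplicity π (t0 - j) with hm
  by_cases hzero : ∃ j ∈ W, a - j = 0
  · obtain ⟨j, hj, hj0⟩ := hzero
    rw [Finset.prod_eq_zero hj hj0]
    exact dvd_zero _
  push_neg at hzero
  have hWt0 : ∀ j ∈ W, t0 - j ≠ 0 := by
    intro j hj h0
    refine Finset.ne_of_mem_erase hj ?_
    linear_combination -h0
  by_cases hat : a = t0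
  · subst hat
    rw [← vv_prod hπ W _ hWt0] at hm
    rw [hm]
    exact pow_multiplicity_dvd π _
  have hta : t0 - a ≠ 0 := fun h0 => hat (by linear_combination -h0)
  set e := multiplicity π (t0 - a) with he
  set M := m + (∑ j ∈ W, multiplicity π (a - j)) + e + 1 with hM
  have hflipm : m = ∑ j ∈ W, multiplicity π (j - t0) := by
    refine Finset.sum_congr rfl fun j hj => ?_
    rw [← vv_neg (π := π) (j - t0), neg_sub]
  have hflipa : ∑ j ∈ W, multiplicity π (a - j) = ∑ j ∈ W, multiplicity π (j - a) := by
    refine Finset.sum_congr rfl fun j hj => ?_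
    rw [← vv_neg (π := π) (j - a), neg_sub]
  have hsum_e : ∑ j ∈ W, multiplicity π (j - t0)
      = ∑ l ∈ Finset.Icc 1 M, cnt π W l t0 := by
    refine sum_vv_eq hπ W t0 (fun j hj => Finset.ne_of_mem_erase hj) fun j hj => ?_
    have h1 : multiplicity π (j - t0) ≤ m := by
      rw [hflipm]
      exact Finset.single_le_sum (f := fun j => multiplicity π (j - t0))
        (fun p _ => Nat.zero_le _) hj
    omega
  have hsum_f : ∑ j ∈ W, multiplicity π (j - a)
      = ∑ l ∈ Finset.Icc 1 M, cnt π W l a := by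
    refine sum_vv_eq hπ W a (fun j hj => fun h => hzero j hj (by rw [h]; ring)) fun j hj => ?_
    have h1 : multiplicity π (j - a) ≤ ∑ j ∈ W, multiplicity π (a - j) := by
      rw [hflipa]
      exact Finset.single_le_sum (f := fun j => multiplicity π (j - a))
        (fun p _ => Nat.zero_le _) hj
    omega
  have hterm : ∀ l ∈ Finset.Icc 1 M, cnt π W l t0 ≤ cnt π W l a := by
    intro l hl
    rw [Finset.mem_Icc] at hl
    by_cases hle : π ^ l ∣ t0 - a
    · exact le_of_eq (cnt_congr π W hle)
    · rw [erase_cnt_self π T ht0 l, erase_cnt_other π T t0 hle]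
      have := hbal l hl.1 t0 a
      have h2 : 1 ≤ cnt π T l t0 := cnt_one_le π T ht0 (by simp)
      omega
  have hsum_le : ∑ l ∈ Finset.Icc 1 M, cnt π W l t0 ≤ ∑ l ∈ Finset.Icc 1 M, cnt π W l a :=
    Finset.sum_le_sum hterm
  rw [← hsum_e, ← hsum_f] at hsum_le
  have hne : (∏ j ∈ W, (a - j)) ≠ 0 := Finset.prod_ne_zero_iff.2 hzero
  rw [pow_dvd_iff hπ hne]
  rw [vv_prod hπ W _ hzero]
  omega

end aud

section poly

variable {K : Type*} [Field K] [Algebra A K] [IsFractionRing A K]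
variable {π : A}

lemma testpoly_natDegree (π : A) (m : ℕ) (W : Finset A) :
    (Polynomial.C ((algebraMap A K (π ^ m))⁻¹) *
      ∏ j ∈ W, (Polynomial.X - Polynomial.C (algebraMap A K j))).natDegree ≤ W.card := by
  refine le_trans (Polynomial.natDegree_C_mul_le _ _) ?_
  rw [Polynomial.natDegree_prod_of_monic _ _ (fun j _ => Polynomial.monic_X_sub_C _)]
  simp [Polynomial.natDegree_X_sub_C]

lemma testpoly_image (hπ : Irreducible π) (m : ℕ) (W : Finset A) (a : A) :
    (∃ b : A, Polynomial.eval (algebraMap A K a)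
        (Polynomial.C ((algebraMap A K (π ^ m))⁻¹) *
          ∏ j ∈ W, (Polynomial.X - Polynomial.C (algebraMap A K j))) = algebraMap A K b)
      ↔ π ^ m ∣ ∏ j ∈ W, (a - j) := by
  have hinj : Function.Injective (algebraMap A K) := IsFractionRing.injective A K
  have hπK : algebraMap A K (π ^ m) ≠ 0 := by
    rw [map_ne_zero_iff _ hinj]
    exact pow_ne_zero _ hπ.ne_zero
  have heval : Polynomial.eval (algebraMap A K a)
      (Polynomial.C ((algebraMap A K (π ^ m))⁻¹) *
        ∏ j ∈ W, (Polynomial.X - Polynomial.C (algebraMap A K j)))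
      = (algebraMap A K (π ^ m))⁻¹ * algebraMap A K (∏ j ∈ W, (a - j)) := by
    rw [Polynomial.eval_mul, Polynomial.eval_C, Polynomial.eval_prod, map_prod]
    congr 1
    refine Finset.prod_congr rfl fun j hj => ?_
    rw [Polynomial.eval_sub, Polynomial.eval_X, Polynomial.eval_C, map_sub]
  rw [heval]
  constructor
  · rintro ⟨b, hb⟩
    refine ⟨b, hinj ?_⟩
    rw [map_mul, ← hb, ← mul_assoc, mul_inv_cancel₀ hπK, one_mul]
  · rintro ⟨c, hc⟩
    refine ⟨c, ?_⟩
    rw [hc, map_mul, ← mul_assoc, inv_mul_cancel₀ hπK, one_mul]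

/-- a universal set has at least n+1 elements -/
lemma card_ge_of_universal (hπ : Irreducible π) {n : ℕ} {S : Finset A}
    (hu : IsNUniversal A K n S) : n + 1 ≤ S.card := by
  by_contra hlt
  push_neg at hlt
  have hinj : Function.Injective fun j : ℕ => π ^ j := by
    intro i j hij
    have h1 : multiplicity π (π ^ i) = multiplicity π (π ^ j) := by
      simp only at hij
      rw [hij]
    rwa [multiplicity_pow_self hπ.ne_zero hπ.not_isUnit,
      multiplicity_pow_self hπ.ne_zero hπ.not_isUnit] at h1
  have hns : ¬ (Finset.range (S.card + 1)).image (fun j => π ^ j) ⊆ S := by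
    intro hsub
    have := Finset.card_le_card hsub
    rw [Finset.card_image_of_injective _ hinj, Finset.card_range] at this
    omega
  obtain ⟨x, hximg, hxS⟩ := Finset.not_subset.1 hns
  have hxne : ∀ j ∈ S, x - j ≠ 0 := by
    intro j hj h0
    exact hxS (by rw [show x = j by linear_combination h0]; exact hj)
  have hprene : (∏ j ∈ S, (x - j)) ≠ 0 := Finset.prod_ne_zero_iff.2 hxne
  set m := multiplicity π (∏ j ∈ S, (x - j)) + 1 with hm
  have hdeg : (Polynomial.C ((algebraMap A K (π ^ m))⁻¹) *
      ∏ j ∈ S, (Polynomial.X - Polynomial.C (algebraMap A K j))).natDegree ≤ n :=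
    le_trans (testpoly_natDegree π m S) (by omega)
  have hiff := hu _ hdeg
  have hrhs : ∀ s ∈ S, ∃ b : A, Polynomial.eval (algebraMap A K s)
      (Polynomial.C ((algebraMap A K (π ^ m))⁻¹) *
        ∏ j ∈ S, (Polynomial.X - Polynomial.C (algebraMap A K j))) = algebraMap A K b := by
    intro s hs
    rw [testpoly_image hπ m S s]
    rw [Finset.prod_eq_zero hs (by ring)]
    exact dvd_zero _
  have hlhs := hiff.2 hrhs x
  rw [testpoly_image hπ m S x] at hlhs
  have := (pow_dvd_iff hπ hprene m).1 hlhs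
  omega

/-- Lagrange interpolation: local optimality of a subset implies universality. -/
lemma universal_of_local_opt (hπ : Irreducible π) {n : ℕ} {S T : Finset A}
    (hTS : T ⊆ S) (hcard : T.card = n + 1)
    (hopt : ∀ t ∈ T, ∀ a : A,
      π ^ (∑ j ∈ T.erase t, multiplicity π (t - j)) ∣ ∏ j ∈ T.erase t, (a - j)) :
    IsNUniversal A K n S := by
  intro P hdeg
  constructor
  · intro h s hs
    exact h s
  intro hS a
  classical
  have hinj : Function.Injective (algebraMap A K) := IsFractionRing.injective A K
  have hb : ∀ t ∈ T, ∃ b : A, Polynomial.eval (algebraMap A K t) P = algebraMap A K b :=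
    fun t ht => hS t (hTS ht)
  choose! bf hbf using hb
  set Δ : A → A := fun t => ∏ j ∈ T.erase t, (t - j) with hΔ
  have hΔne : ∀ t ∈ T, Δ t ≠ 0 := by
    intro t ht
    refine Finset.prod_ne_zero_iff.2 ?_
    intro j hj h0
    exact Finset.ne_of_mem_erase hj (by linear_combination -h0)
  have hDtotne : (∏ t ∈ T, Δ t) ≠ 0 := Finset.prod_ne_zero_iff.2 hΔne
  set F : Polynomial K := Polynomial.C (algebraMap A K (∏ t ∈ T, Δ t)) * P
      - ∑ t ∈ T, Polynomial.C (algebraMap A K (bf t * ∏ j ∈ T.erase t, Δ j)) *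
          ∏ j ∈ T.erase t, (Polynomial.X - Polynomial.C (algebraMap A K j)) with hF
  -- degree bound
  have hFdeg : F.natDegree < n + 1 := by
    have h1 : (Polynomial.C (algebraMap A K (∏ t ∈ T, Δ t)) * P).natDegree ≤ n :=
      le_trans (Polynomial.natDegree_C_mul_le _ _) hdeg
    have h2 : (∑ t ∈ T, Polynomial.C (algebraMap A K (bf t * ∏ j ∈ T.erase t, Δ j)) *
        ∏ j ∈ T.erase t, (Polynomial.X - Polynomial.C (algebraMap A K j))).natDegree ≤ n := by
      refine Polynomial.natDegree_sum_le_of_forall_le _ _ fun t ht => ?_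
      refine le_trans (Polynomial.natDegree_C_mul_le _ _) ?_
      rw [Polynomial.natDegree_prod_of_monic _ _ (fun j _ => Polynomial.monic_X_sub_C _)]
      simp only [Polynomial.natDegree_X_sub_C]
      rw [Finset.sum_const, smul_eq_mul, mul_one, Finset.card_erase_of_mem ht, hcard]
      omega
    have h3 := Polynomial.natDegree_sub_le (Polynomial.C (algebraMap A K (∏ t ∈ T, Δ t)) * P)
      (∑ t ∈ T, Polynomial.C (algebraMap A K (bf t * ∏ j ∈ T.erase t, Δ j)) *
        ∏ j ∈ T.erase t, (Polynomial.X - Polynomial.C (algebraMap A K j)))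
    rw [← hF] at h3
    have h4 := max_le h1 h2
    omega
  -- evaluation of the products
  have hprodeval : ∀ x t : A, Polynomial.eval (algebraMap A K x)
      (∏ j ∈ T.erase t, (Polynomial.X - Polynomial.C (algebraMap A K j)))
      = algebraMap A K (∏ j ∈ T.erase t, (x - j)) := by
    intro x t
    rw [Polynomial.eval_prod, map_prod]
    refine Finset.prod_congr rfl fun j hj => ?_
    rw [Polynomial.eval_sub, Polynomial.eval_X, Polynomial.eval_C, map_sub]
  -- F vanishes on the image of T
  have hFroots : ∀ x ∈ T.image (algebraMap A K), F.eval x = 0 := by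
    intro x hx
    obtain ⟨t, ht, rfl⟩ := Finset.mem_image.1 hx
    rw [hF, Polynomial.eval_sub, Polynomial.eval_mul, Polynomial.eval_C,
      Polynomial.eval_finset_sum, sub_eq_zero]
    rw [Finset.sum_eq_single_of_mem t ht (fun t' ht' htt' => ?_)]
    · rw [Polynomial.eval_mul, Polynomial.eval_C, hbf t ht, hprodeval t t]
      rw [← map_mul, ← map_mul]
      congr 1
      have hsplit : ∏ t' ∈ T, Δ t' = Δ t * ∏ j ∈ T.erase t, Δ j :=
        (Finset.mul_prod_erase T Δ ht).symm
      rw [hsplit]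
      have hΔt : Δ t = ∏ j ∈ T.erase t, (t - j) := rfl
      rw [hΔt]
      ring
    · rw [Polynomial.eval_mul, Polynomial.eval_prod]
      have hmem : t ∈ T.erase t' := Finset.mem_erase.2 ⟨Ne.symm htt', ht⟩
      refine mul_eq_zero_of_right _ (Finset.prod_eq_zero hmem ?_)
      rw [Polynomial.eval_sub, Polynomial.eval_X, Polynomial.eval_C, sub_self]
  -- hence F = 0
  have hF0 : F = 0 := by
    refine Polynomial.eq_zero_of_natDegree_lt_card_of_eval_eq_zero' F
      (T.image (algebraMap A K)) hFroots ?_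
    rwa [Finset.card_image_of_injective _ hinj, hcard]
  -- evaluate the identity at a
  have hev : algebraMap A K (∏ t ∈ T, Δ t) * Polynomial.eval (algebraMap A K a) P
      = algebraMap A K (∑ t ∈ T, bf t *
          ((∏ j ∈ T.erase t, Δ j) * ∏ j ∈ T.erase t, (a - j))) := by
    have h1 : Polynomial.eval (algebraMap A K a) F = 0 := by rw [hF0, Polynomial.eval_zero]
    rw [hF, Polynomial.eval_sub, Polynomial.eval_mul, Polynomial.eval_C,
      Polynomial.eval_finset_sum, sub_eq_zero] at h1
    rw [h1, map_sum]
    refine Finset.sum_congr rfl fun t ht => ?_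
    rw [Polynomial.eval_mul, Polynomial.eval_C, hprodeval a t]
    rw [← map_mul]
    congr 1
    ring
  -- divisibility of the numerator
  have hVsplit : ∀ t ∈ T, multiplicity π (∏ t' ∈ T, Δ t')
      = multiplicity π (Δ t) + multiplicity π (∏ j ∈ T.erase t, Δ j) := by
    intro t ht
    rw [vv_prod hπ T Δ hΔne, ← Finset.add_sum_erase T _ ht,
      vv_prod hπ (T.erase t) Δ (fun j hj => hΔne j (Finset.mem_of_mem_erase hj))]
  have hdvd : π ^ (multiplicity π (∏ t ∈ T, Δ t)) ∣ ∑ t ∈ T, bf t *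
      ((∏ j ∈ T.erase t, Δ j) * ∏ j ∈ T.erase t, (a - j)) := by
    refine Finset.dvd_sum fun t ht => ?_
    have hopt1 : π ^ (multiplicity π (Δ t)) ∣ ∏ j ∈ T.erase t, (a - j) := by
      have h0 := hopt t ht a
      have hΔval : multiplicity π (Δ t) = ∑ j ∈ T.erase t, multiplicity π (t - j) := by
        have hne : ∀ j ∈ T.erase t, t - j ≠ 0 := by
          intro j hj hj0
          exact Finset.ne_of_mem_erase hj (by linear_combination -hj0)
        exact vv_prod hπ (T.erase t) _ hne
      rwa [← hΔval] at h0
    have hd2 : π ^ (multiplicity π (∏ j ∈ T.erase t, Δ j)) ∣ ∏ j ∈ T.erase t, Δ j :=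
      pow_multiplicity_dvd π _
    have hd3 : π ^ (multiplicity π (∏ t' ∈ T, Δ t'))
        ∣ (∏ j ∈ T.erase t, Δ j) * ∏ j ∈ T.erase t, (a - j) := by
      rw [hVsplit t ht, pow_add, mul_comm (π ^ multiplicity π (Δ t))]
      exact mul_dvd_mul hd2 hopt1
    exact Dvd.dvd.mul_left hd3 (bf t)
  obtain ⟨g, hg⟩ := hdvd
  obtain ⟨w, hw⟩ := pow_multiplicity_dvd π (∏ t ∈ T, Δ t)
  have hwne : w ≠ 0 := by
    rintro rfl
    rw [mul_zero] at hw
    exact hDtotne hw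
  have hwnd : ¬ π ∣ w := by
    intro hdw
    have hd : π ^ (multiplicity π (∏ t ∈ T, Δ t) + 1) ∣ ∏ t ∈ T, Δ t := by
      conv_rhs => rw [hw]
      rw [pow_succ]
      exact mul_dvd_mul_left _ hdw
    have := (pow_dvd_iff hπ hDtotne _).1 hd
    omega
  have hwunit : IsUnit w := by
    by_contra hnu
    refine hwnd ?_
    have hmem : w ∈ IsLocalRing.maximalIdeal A :=
      (IsLocalRing.mem_maximalIdeal w).2 (mem_nonunits_iff.2 hnu)
    rw [hπ.maximalIdeal_eq, Ideal.mem_span_singleton] at hmem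
    exact hmem
  obtain ⟨u, hu_eq⟩ := hwunit
  refine ⟨g * ↑u⁻¹, ?_⟩
  have hKV : algebraMap A K (π ^ (multiplicity π (∏ t ∈ T, Δ t))) ≠ 0 := by
    rw [map_ne_zero_iff _ hinj]
    exact pow_ne_zero _ hπ.ne_zero
  have hKw : algebraMap A K w ≠ 0 := by
    rw [map_ne_zero_iff _ hinj]
    exact hwne
  have hev2 : algebraMap A K (π ^ (multiplicity π (∏ t ∈ T, Δ t)))
        * (algebraMap A K w * Polynomial.eval (algebraMap A K a) P)
      = algebraMap A K (π ^ (multiplicity π (∏ t ∈ T, Δ t))) * algebraMap A K g := by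
    rw [← mul_assoc, ← map_mul, ← hw, hev, hg, map_mul]
  have hev3 : algebraMap A K w * Polynomial.eval (algebraMap A K a) P = algebraMap A K g :=
    mul_left_cancel₀ hKV hev2
  have hfin : algebraMap A K w * algebraMap A K (g * ↑u⁻¹)
      = algebraMap A K w * Polynomial.eval (algebraMap A K a) P := by
    rw [hev3, ← map_mul]
    congr 1
    rw [← hu_eq]
    calc ↑u * (g * ↑u⁻¹) = g * (↑u * ↑u⁻¹) := by ring
    _ = g * 1 := by rw [Units.mul_inv]
    _ = g := mul_one g
  exact (mul_left_cancel₀ hKw hfin).symm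

/-- sum-of-distances functional used for minimization -/
noncomputable def Dsum (π : A) (U : Finset A) : ℕ :=
  ∑ t ∈ U, ∑ j ∈ U.erase t, multiplicity π (t - j)

lemma Dsum_decomp (π : A) (U : Finset A) {t : A} (ht : t ∈ U) :
    Dsum π U = Dsum π (U.erase t) + 2 * ∑ j ∈ U.erase t, multiplicity π (t - j) := by
  classical
  unfold Dsum
  rw [← Finset.add_sum_erase _ _ ht]
  have hinner : ∀ u ∈ U.erase t, ∑ j ∈ U.erase u, multiplicity π (u - j)
      = multiplicity π (u - t) + ∑ j ∈ (U.erase t).erase u, multiplicity π (u - j) := by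
    intro u hu
    have hut : u ≠ t := Finset.ne_of_mem_erase hu
    have htmem : t ∈ U.erase u := Finset.mem_erase.2 ⟨fun h => hut h.symm, ht⟩
    rw [← Finset.add_sum_erase _ _ htmem, Finset.erase_right_comm]
  rw [Finset.sum_congr rfl hinner, Finset.sum_add_distrib]
  have hflip : ∑ u ∈ U.erase t, multiplicity π (u - t)
      = ∑ u ∈ U.erase t, multiplicity π (t - u) := by
    refine Finset.sum_congr rfl fun u hu => ?_
    rw [← vv_neg (π := π) (u - t), neg_sub]
  rw [hflip]
  ring

/-- a minimizing (n+1)-subset of a universal set is locally optimal -/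
lemma local_opt_of_universal (hπ : Irreducible π) {n : ℕ} {S T : Finset A}
    (hu : IsNUniversal A K n S) (hT : T ∈ S.powersetCard (n + 1))
    (hmin : ∀ T' ∈ S.powersetCard (n + 1), Dsum π T ≤ Dsum π T') :
    ∀ t ∈ T, ∀ a : A,
      π ^ (∑ j ∈ T.erase t, multiplicity π (t - j)) ∣ ∏ j ∈ T.erase t, (a - j) := by
  intro t ht a
  obtain ⟨hTS, hTcard⟩ := Finset.mem_powersetCard.1 hT
  set m := ∑ j ∈ T.erase t, multiplicity π (t - j) with hm
  have hdeg : (Polynomial.C ((algebraMap A K (π ^ m))⁻¹) *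
      ∏ j ∈ T.erase t, (Polynomial.X - Polynomial.C (algebraMap A K j))).natDegree ≤ n := by
    refine le_trans (testpoly_natDegree π m (T.erase t)) ?_
    rw [Finset.card_erase_of_mem ht, hTcard]
    omega
  have hiff := hu _ hdeg
  have hrhs : ∀ s ∈ S, ∃ b : A, Polynomial.eval (algebraMap A K s)
      (Polynomial.C ((algebraMap A K (π ^ m))⁻¹) *
        ∏ j ∈ T.erase t, (Polynomial.X - Polynomial.C (algebraMap A K j)))
      = algebraMap A K b := by
    intro s hs
    rw [testpoly_image hπ m (T.erase t) s]
    by_cases hsT : s ∈ T.erase t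
    · rw [Finset.prod_eq_zero hsT (by ring)]
      exact dvd_zero _
    by_cases hst : s = t
    · subst hst
      have hne : ∀ j ∈ T.erase s, s - j ≠ 0 := by
        intro j hj h0
        exact Finset.ne_of_mem_erase hj (by linear_combination -h0)
      rw [hm, ← vv_prod hπ _ _ hne]
      exact pow_multiplicity_dvd π _
    · -- swap argument : s ∈ S \ T
      have hsnT : s ∉ T := by
        intro hsmem
        exact hsT (Finset.mem_erase.2 ⟨hst, hsmem⟩)
      set T' := insert s (T.erase t) with hT'
      have hsnTe : s ∉ T.erase t := hsT
      have hT'mem : T' ∈ S.powersetCard (n + 1) := by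
        rw [Finset.mem_powersetCard]
        constructor
        · intro u hu
          rcases Finset.mem_insert.1 hu with rfl | hu2
          · exact hs
          · exact hTS (Finset.mem_of_mem_erase hu2)
        · rw [Finset.card_insert_of_notMem hsnTe, Finset.card_erase_of_mem ht, hTcard]
          omega
      have hmin2 := hmin T' hT'mem
      rw [Dsum_decomp π T ht, Dsum_decomp π T' (Finset.mem_insert_self s _)] at hmin2
      rw [show T'.erase s = T.erase t from by rw [hT', Finset.erase_insert hsnTe]] at hmin2
      have hswap : m ≤ ∑ j ∈ T.erase t, multiplicity π (s - j) := by omega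
      have hne : ∀ j ∈ T.erase t, s - j ≠ 0 := by
        intro j hj h0
        have hsj : s = j := by linear_combination h0
        rw [hsj] at hsnT
        exact hsnT (Finset.mem_of_mem_erase hj)
      have hprodne : (∏ j ∈ T.erase t, (s - j)) ≠ 0 := Finset.prod_ne_zero_iff.2 hne
      rw [pow_dvd_iff hπ hprodne, vv_prod hπ _ _ hne]
      exact hswap
  have hlhs := hiff.2 hrhs a
  rw [testpoly_image hπ m (T.erase t) a] at hlhs
  exact hlhs

end poly

section translate

variable {π : A}

lemma isAUD_iff_bal (hπ : Irreducible π) (T : Finset A) (k : ℕ) :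
    IsAUD ((IsLocalRing.maximalIdeal A) ^ k) T ↔ Bal π T k := by
  have hfilter : ∀ a : A, (T.filter fun s => s - a ∈ (IsLocalRing.maximalIdeal A) ^ k)
      = T.filter fun s => π ^ k ∣ s - a := by
    intro a
    apply Finset.filter_congr
    intro t _
    exact mem_pow_maximalIdeal_iff hπ k (t - a)
  constructor
  · intro h a b
    have h1 := h a b
    rw [hfilter a, hfilter b] at h1
    simp only [Set.mem_insert_iff, Set.mem_singleton_iff] at h1
    unfold cnt
    omega
  · intro h a b
    rw [hfilter a, hfilter b]
    have h1 := h a b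
    have h2 := h b a
    simp only [Set.mem_insert_iff, Set.mem_singleton_iff]
    unfold cnt at h1 h2
    omega

end translate

end NUniv

open NUniv in
/-- In a discrete valuation ring `A` with maximal ideal `𝔪`, a finite set `S` is
`n`-universal if and only if it contains a subset with `n + 1` elements which is almost
uniformly distributed modulo `𝔪 ^ k` for every positive integer `k`. -/
theorem stmt2 {A K : Type*} [CommRing A] [IsDomain A] [IsDiscreteValuationRing A] [Field K]
    [Algebra A K] [IsFractionRing A K] (n : ℕ) (S : Finset A) :
    IsNUniversal A K n S ↔
      ∃ S' ⊆ S, S'.card = n + 1 ∧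
        ∀ k : ℕ, 0 < k → IsAUD ((IsLocalRing.maximalIdeal A) ^ k) S' := by
  obtain ⟨π, hπ⟩ := IsDiscreteValuationRing.exists_irreducible A
  constructor
  · intro hu
    have hcard : n + 1 ≤ S.card := card_ge_of_universal hπ hu
    obtain ⟨T, hT, hmin⟩ := Finset.exists_min_image (S.powersetCard (n + 1)) (Dsum π)
      (Finset.powersetCard_nonempty.2 hcard)
    have hTmem := Finset.mem_powersetCard.1 hT
    refine ⟨T, hTmem.1, hTmem.2, fun k hk => ?_⟩
    rw [isAUD_iff_bal hπ]
    exact bal_of_local_opt hπ T (local_opt_of_universal hπ hu hT hmin) k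
  · rintro ⟨T, hTS, hcard, haud⟩
    refine universal_of_local_opt hπ hTS hcard ?_
    refine local_opt_of_bal hπ T (fun k hk => ?_)
    exact (isAUD_iff_bal hπ T k).1 (haud k hk)
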